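/- Let M be the submonoid of the additive monoid ℚ₊ of nonnegative rational numbers generated by the set {1/2ⁱ : i ∈ ℕ, i ≥ 1} ∪ {1/3ʲ : j ∈ ℕ, j ≥ 1}. Then M has no essential generators, and the element 5/6 of M is of height (0, 0, 0, …) in M. -/

import Mathlib

/-- `a` is an essential generator of `M ⊆ ℚ₊`: the submonoid generated by
`M ∖ {a}` is not all of `M`. -/
def IsEssentialGenerator (M : AddSubmonoid ℚ) (a : ℚ) : Prop :=
  a ∈ M ∧ AddSubmonoid.closure ((M : Set ℚ) \ {a}) ≠ M

/-- `a` is an element of `M` of height `(0,0,0,…)`: for every prime `p`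
the equation `p·x = a` has no solution `x ∈ M`. -/
def IsHeightZero (M : AddSubmonoid ℚ) (a : ℚ) : Prop :=
  ∀ p : ℕ, p.Prime → ¬ ∃ x ∈ M, (p : ℚ) * x = a

/-- Key descent lemma. -/
lemma keyK (w s c : ℕ) (hb : ∀ b : ℕ, 2 ^ s * b ≤ c → ¬ (3:ℕ) ^ w ∣ (c - 2 ^ s * b)) :
    ∀ v u a b : ℕ, a * 3 ^ (v + w) + b * 2 ^ (u + s) = c * 2 ^ u * 3 ^ v → False := by
  intro v
  induction v with
  | zero =>
    intro u a b h
    rw [pow_zero, mul_one, Nat.zero_add] at h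
    -- h : a * 3 ^ w + b * 2 ^ (u + s) = c * 2 ^ u
    have hble : 2 ^ s * b ≤ c := by
      have h1 : b * 2 ^ (u + s) ≤ c * 2 ^ u := by
        calc b * 2 ^ (u + s) ≤ a * 3 ^ w + b * 2 ^ (u + s) := Nat.le_add_left _ _
        _ = c * 2 ^ u := h
      have h2 : (2 ^ s * b) * 2 ^ u ≤ c * 2 ^ u := by
        calc (2 ^ s * b) * 2 ^ u = b * 2 ^ (u + s) := by rw [pow_add]; ring
        _ ≤ c * 2 ^ u := h1
      exact Nat.le_of_mul_le_mul_right h2 (Nat.pow_pos (n := u) (by norm_num))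
    obtain ⟨d, hd⟩ := Nat.exists_eq_add_of_le hble
    apply hb b hble
    have hdc : c - 2 ^ s * b = d := by omega
    rw [hdc]
    have h3 : a * 3 ^ w = d * 2 ^ u := by
      rw [hd, pow_add] at h
      have hr : (2 ^ s * b + d) * 2 ^ u = b * (2 ^ u * 2 ^ s) + d * 2 ^ u := by ring
      rw [hr] at h
      rw [show a * 3 ^ w + b * (2 ^ u * 2 ^ s) = b * (2 ^ u * 2 ^ s) + a * 3 ^ w from by ring] at h
      exact Nat.add_left_cancel h
    have h4 : (3:ℕ) ^ w ∣ d * 2 ^ u := ⟨a, by rw [← h3]; ring⟩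
    have hcop : Nat.Coprime (3 ^ w) (2 ^ u) := (by norm_num : Nat.Coprime 3 2).pow w u
    exact hcop.dvd_of_dvd_mul_right h4
  | succ v ih =>
    intro u a b h
    have hd1 : (3:ℕ) ∣ c * 2 ^ u * 3 ^ (v + 1) :=
      Dvd.dvd.mul_left (dvd_pow_self 3 (Nat.succ_ne_zero v)) _
    have hd2 : (3:ℕ) ∣ a * 3 ^ (v + 1 + w) :=
      Dvd.dvd.mul_left (dvd_pow_self 3 (by omega)) a
    have heq : c * 2 ^ u * 3 ^ (v + 1) - a * 3 ^ (v + 1 + w) = b * 2 ^ (u + s) := by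
      rw [← h, Nat.add_sub_cancel_left]
    have h3 : (3:ℕ) ∣ b * 2 ^ (u + s) := heq ▸ Nat.dvd_sub hd1 hd2
    have hb3 : (3:ℕ) ∣ b := by
      rcases (Nat.Prime.dvd_mul (by norm_num)).mp h3 with h' | h'
      · exact h'
      · exact absurd (Nat.Prime.dvd_of_dvd_pow (by norm_num) h') (by norm_num)
    obtain ⟨b', rfl⟩ := hb3
    apply ih u a b'
    have hmul : 3 * (a * 3 ^ (v + w) + b' * 2 ^ (u + s)) = 3 * (c * 2 ^ u * 3 ^ v) := by
      calc 3 * (a * 3 ^ (v + w) + b' * 2 ^ (u + s))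
          = a * 3 ^ (v + 1 + w) + 3 * b' * 2 ^ (u + s) := by ring
        _ = c * 2 ^ u * 3 ^ (v + 1) := h
        _ = 3 * (c * 2 ^ u * 3 ^ v) := by ring
    exact Nat.eq_of_mul_eq_mul_left (by norm_num) hmul

lemma red2 (i j a b : ℕ) (h : 12 * (a * 3 ^ j + b * 2 ^ i) = 5 * 2 ^ i * 3 ^ j) : False := by
  have hd4 : (2:ℕ) ^ 2 ∣ (5 * 3 ^ j) * 2 ^ i := by
    refine ⟨3 * (a * 3 ^ j + b * 2 ^ i), ?_⟩
    rw [show (5 * 3 ^ j) * 2 ^ i = 5 * 2 ^ i * 3 ^ j from by ring, ← h]; ring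
  have hcop : Nat.Coprime (2 ^ 2) (5 * 3 ^ j) :=
    Nat.Coprime.mul_right (by norm_num) ((by norm_num : Nat.Coprime 2 3).pow 2 j)
  have hi : 2 ≤ i := (Nat.pow_dvd_pow_iff_le_right (by norm_num)).mp
    (hcop.dvd_of_dvd_mul_left hd4)
  have hd3 : (3:ℕ) ^ 1 ∣ (5 * 2 ^ i) * 3 ^ j := by
    refine ⟨4 * (a * 3 ^ j + b * 2 ^ i), ?_⟩
    rw [show (5 * 2 ^ i) * 3 ^ j = 5 * 2 ^ i * 3 ^ j from by ring, ← h]; ring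
  have hcop3 : Nat.Coprime (3 ^ 1) (5 * 2 ^ i) :=
    Nat.Coprime.mul_right (by norm_num) ((by norm_num : Nat.Coprime 3 2).pow 1 i)
  have hj : 1 ≤ j := (Nat.pow_dvd_pow_iff_le_right (by norm_num)).mp
    (hcop3.dvd_of_dvd_mul_left hd3)
  obtain ⟨i', rfl⟩ := Nat.exists_eq_add_of_le hi
  obtain ⟨j', rfl⟩ := Nat.exists_eq_add_of_le hj
  have h' : a * 3 ^ (j' + 1) + b * 2 ^ (i' + 2) = 5 * 2 ^ i' * 3 ^ j' := by
    refine Nat.eq_of_mul_eq_mul_left (show 0 < 12 by norm_num) ?_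
    calc 12 * (a * 3 ^ (j' + 1) + b * 2 ^ (i' + 2))
        = 12 * (a * 3 ^ (1 + j') + b * 2 ^ (2 + i')) := by ring
      _ = 5 * 2 ^ (2 + i') * 3 ^ (1 + j') := h
      _ = 12 * (5 * 2 ^ i' * 3 ^ j') := by ring
  exact keyK 1 2 5 (by intro b hb; norm_num at hb ⊢; omega) j' i' a b h'

lemma red3 (i j a b : ℕ) (h : 18 * (a * 3 ^ j + b * 2 ^ i) = 5 * 2 ^ i * 3 ^ j) : False := by
  have hd4 : (2:ℕ) ^ 1 ∣ (5 * 3 ^ j) * 2 ^ i := by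
    refine ⟨9 * (a * 3 ^ j + b * 2 ^ i), ?_⟩
    rw [show (5 * 3 ^ j) * 2 ^ i = 5 * 2 ^ i * 3 ^ j from by ring, ← h]; ring
  have hcop : Nat.Coprime (2 ^ 1) (5 * 3 ^ j) :=
    Nat.Coprime.mul_right (by norm_num) ((by norm_num : Nat.Coprime 2 3).pow 1 j)
  have hi : 1 ≤ i := (Nat.pow_dvd_pow_iff_le_right (by norm_num)).mp
    (hcop.dvd_of_dvd_mul_left hd4)
  have hd3 : (3:ℕ) ^ 2 ∣ (5 * 2 ^ i) * 3 ^ j := by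
    refine ⟨2 * (a * 3 ^ j + b * 2 ^ i), ?_⟩
    rw [show (5 * 2 ^ i) * 3 ^ j = 5 * 2 ^ i * 3 ^ j from by ring, ← h]; ring
  have hcop3 : Nat.Coprime (3 ^ 2) (5 * 2 ^ i) :=
    Nat.Coprime.mul_right (by norm_num) ((by norm_num : Nat.Coprime 3 2).pow 2 i)
  have hj : 2 ≤ j := (Nat.pow_dvd_pow_iff_le_right (by norm_num)).mp
    (hcop3.dvd_of_dvd_mul_left hd3)
  obtain ⟨i', rfl⟩ := Nat.exists_eq_add_of_le hi
  obtain ⟨j', rfl⟩ := Nat.exists_eq_add_of_le hj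
  have h' : a * 3 ^ (j' + 2) + b * 2 ^ (i' + 1) = 5 * 2 ^ i' * 3 ^ j' := by
    refine Nat.eq_of_mul_eq_mul_left (show 0 < 18 by norm_num) ?_
    calc 18 * (a * 3 ^ (j' + 2) + b * 2 ^ (i' + 1))
        = 18 * (a * 3 ^ (2 + j') + b * 2 ^ (1 + i')) := by ring
      _ = 5 * 2 ^ (1 + i') * 3 ^ (2 + j') := h
      _ = 18 * (5 * 2 ^ i' * 3 ^ j') := by ring
  exact keyK 2 1 5 (by intro b hb; norm_num at hb ⊢; omega) j' i' a b h'

lemma red5 (i j a b : ℕ) (h : 30 * (a * 3 ^ j + b * 2 ^ i) = 5 * 2 ^ i * 3 ^ j) : False := by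
  have hd4 : (2:ℕ) ^ 1 ∣ (5 * 3 ^ j) * 2 ^ i := by
    refine ⟨15 * (a * 3 ^ j + b * 2 ^ i), ?_⟩
    rw [show (5 * 3 ^ j) * 2 ^ i = 5 * 2 ^ i * 3 ^ j from by ring, ← h]; ring
  have hcop : Nat.Coprime (2 ^ 1) (5 * 3 ^ j) :=
    Nat.Coprime.mul_right (by norm_num) ((by norm_num : Nat.Coprime 2 3).pow 1 j)
  have hi : 1 ≤ i := (Nat.pow_dvd_pow_iff_le_right (by norm_num)).mp
    (hcop.dvd_of_dvd_mul_left hd4)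
  have hd3 : (3:ℕ) ^ 1 ∣ (5 * 2 ^ i) * 3 ^ j := by
    refine ⟨10 * (a * 3 ^ j + b * 2 ^ i), ?_⟩
    rw [show (5 * 2 ^ i) * 3 ^ j = 5 * 2 ^ i * 3 ^ j from by ring, ← h]; ring
  have hcop3 : Nat.Coprime (3 ^ 1) (5 * 2 ^ i) :=
    Nat.Coprime.mul_right (by norm_num) ((by norm_num : Nat.Coprime 3 2).pow 1 i)
  have hj : 1 ≤ j := (Nat.pow_dvd_pow_iff_le_right (by norm_num)).mp
    (hcop3.dvd_of_dvd_mul_left hd3)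
  obtain ⟨i', rfl⟩ := Nat.exists_eq_add_of_le hi
  obtain ⟨j', rfl⟩ := Nat.exists_eq_add_of_le hj
  have h' : a * 3 ^ (j' + 1) + b * 2 ^ (i' + 1) = 1 * 2 ^ i' * 3 ^ j' := by
    refine Nat.eq_of_mul_eq_mul_left (show 0 < 30 by norm_num) ?_
    calc 30 * (a * 3 ^ (j' + 1) + b * 2 ^ (i' + 1))
        = 30 * (a * 3 ^ (1 + j') + b * 2 ^ (1 + i')) := by ring
      _ = 5 * 2 ^ (1 + i') * 3 ^ (1 + j') := h
      _ = 30 * (1 * 2 ^ i' * 3 ^ j') := by ring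
  exact keyK 1 1 1 (by intro b hb; norm_num at hb ⊢; omega) j' i' a b h'

lemma rep_mem {x : ℚ}
    (hx : x ∈ AddSubmonoid.closure
      ({q : ℚ | ∃ i : ℕ, 1 ≤ i ∧ q = 1 / 2 ^ i} ∪
       {q : ℚ | ∃ j : ℕ, 1 ≤ j ∧ q = 1 / 3 ^ j})) :
    ∃ a b i j : ℕ, x = a / 2 ^ i + b / 3 ^ j := by
  refine AddSubmonoid.closure_induction ?_ ?_ ?_ hx
  · rintro q (⟨i, hi, rfl⟩ | ⟨j, hj, rfl⟩)
    · exact ⟨1, 0, i, 0, by norm_num⟩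
    · exact ⟨0, 1, 0, j, by norm_num⟩
  · exact ⟨0, 0, 0, 0, by norm_num⟩
  · rintro x y - - ⟨a, b, i, j, rfl⟩ ⟨a', b', i', j', rfl⟩
    refine ⟨a * 2 ^ i' + a' * 2 ^ i, b * 3 ^ j' + b' * 3 ^ j, i + i', j + j', ?_⟩
    have h2 : ((2:ℚ)) ^ i ≠ 0 := by positivity
    have h2' : ((2:ℚ)) ^ i' ≠ 0 := by positivity
    have h3 : ((3:ℚ)) ^ j ≠ 0 := by positivity
    have h3' : ((3:ℚ)) ^ j' ≠ 0 := by positivity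
    push_cast
    field_simp
    ring

theorem example_monoid_no_essential_and_heightZero
    (M : AddSubmonoid ℚ)
    (hMdef : M = AddSubmonoid.closure
      ({q : ℚ | ∃ i : ℕ, 1 ≤ i ∧ q = 1 / 2 ^ i} ∪
       {q : ℚ | ∃ j : ℕ, 1 ≤ j ∧ q = 1 / 3 ^ j})) :
    (∀ a : ℚ, ¬ IsEssentialGenerator M a) ∧
      (5 / 6 : ℚ) ∈ M ∧ IsHeightZero M (5 / 6 : ℚ) := by
  refine ⟨?_, ?_, ?_⟩
  · -- no essential generators
    rintro a ⟨haM, hne⟩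
    apply hne
    apply le_antisymm
    · rw [AddSubmonoid.closure_le]
      exact Set.diff_subset
    · refine le_trans (le_of_eq hMdef) ?_
      rw [AddSubmonoid.closure_le]
      rintro g (⟨i, hi, rfl⟩ | ⟨j, hj, rfl⟩)
      · by_cases hga : (1 / 2 ^ i : ℚ) = a
        · have hlt : (1 / 2 ^ (i+1) : ℚ) < 1 / 2 ^ i := by
            apply one_div_lt_one_div_of_lt (by positivity)
            rw [pow_succ]
            have : (0:ℚ) < 2 ^ i := by positivity
            linarith
          have hmem : (1 / 2 ^ (i+1) : ℚ) ∈ (M : Set ℚ) \ {a} := by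
            refine ⟨?_, ?_⟩
            · rw [hMdef]
              exact AddSubmonoid.subset_closure (Or.inl ⟨i+1, by omega, rfl⟩)
            · simp only [Set.mem_singleton_iff]
              rw [← hga]
              exact ne_of_lt hlt
          have hsum : (1 / 2 ^ i : ℚ) = 1 / 2 ^ (i+1) + 1 / 2 ^ (i+1) := by
            rw [pow_succ]
            have : (2:ℚ) ^ i ≠ 0 := by positivity
            field_simp
            ring
          rw [hsum]
          exact add_mem (AddSubmonoid.subset_closure hmem)
            (AddSubmonoid.subset_closure hmem)
        · refine AddSubmonoid.subset_closure ⟨?_, hga⟩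
          rw [hMdef]
          exact AddSubmonoid.subset_closure (Or.inl ⟨i, hi, rfl⟩)
      · by_cases hga : (1 / 3 ^ j : ℚ) = a
        · have hlt : (1 / 3 ^ (j+1) : ℚ) < 1 / 3 ^ j := by
            apply one_div_lt_one_div_of_lt (by positivity)
            rw [pow_succ]
            have : (0:ℚ) < 3 ^ j := by positivity
            linarith
          have hmem : (1 / 3 ^ (j+1) : ℚ) ∈ (M : Set ℚ) \ {a} := by
            refine ⟨?_, ?_⟩
            · rw [hMdef]
              exact AddSubmonoid.subset_closure (Or.inr ⟨j+1, by omega, rfl⟩)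
            · simp only [Set.mem_singleton_iff]
              rw [← hga]
              exact ne_of_lt hlt
          have hsum : (1 / 3 ^ j : ℚ) = 1 / 3 ^ (j+1) + (1 / 3 ^ (j+1) + 1 / 3 ^ (j+1)) := by
            rw [pow_succ]
            have : (3:ℚ) ^ j ≠ 0 := by positivity
            field_simp
            ring
          rw [hsum]
          exact add_mem (AddSubmonoid.subset_closure hmem)
            (add_mem (AddSubmonoid.subset_closure hmem)
              (AddSubmonoid.subset_closure hmem))
        · refine AddSubmonoid.subset_closure ⟨?_, hga⟩
          rw [hMdef]
          exact AddSubmonoid.subset_closure (Or.inr ⟨j, hj, rfl⟩)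
  · -- 5/6 ∈ M
    have h2 : (1/2 : ℚ) ∈ M := by
      rw [hMdef]
      exact AddSubmonoid.subset_closure (Or.inl ⟨1, le_refl 1, by norm_num⟩)
    have h3 : (1/3 : ℚ) ∈ M := by
      rw [hMdef]
      exact AddSubmonoid.subset_closure (Or.inr ⟨1, le_refl 1, by norm_num⟩)
    have : (5/6 : ℚ) = 1/2 + 1/3 := by norm_num
    rw [this]
    exact add_mem h2 h3
  · -- height zero
    rintro p hp ⟨x, hxM, hpx⟩
    rw [hMdef] at hxM
    obtain ⟨a, b, i, j, rfl⟩ := rep_mem hxM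
    have h2 : ((2:ℚ)) ^ i ≠ 0 := by positivity
    have h3 : ((3:ℚ)) ^ j ≠ 0 := by positivity
    have key : 6 * p * (a * 3 ^ j + b * 2 ^ i) = 5 * 2 ^ i * 3 ^ j := by
      have : ((6 * p * (a * 3 ^ j + b * 2 ^ i) : ℕ) : ℚ)
          = ((5 * 2 ^ i * 3 ^ j : ℕ) : ℚ) := by
        push_cast
        field_simp at hpx
        linarith
      exact_mod_cast this
    have hpd : p ∣ 5 * 2 ^ i * 3 ^ j := ⟨6 * (a * 3 ^ j + b * 2 ^ i), by rw [← key]; ring⟩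
    have hp235 : p = 2 ∨ p = 3 ∨ p = 5 := by
      rcases (Nat.Prime.dvd_mul hp).mp hpd with h' | h'
      · rcases (Nat.Prime.dvd_mul hp).mp h' with h'' | h''
        · right; right
          exact (Nat.prime_dvd_prime_iff_eq hp (by norm_num)).mp h''
        · left
          exact (Nat.prime_dvd_prime_iff_eq hp (by norm_num)).mp
            (Nat.Prime.dvd_of_dvd_pow hp h'')
      · right; left
        exact (Nat.prime_dvd_prime_iff_eq hp (by norm_num)).mp
          (Nat.Prime.dvd_of_dvd_pow hp h')
    rcases hp235 with rfl | rfl | rfl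
    · exact red2 i j a b (by linarith [key])
    · exact red3 i j a b (by linarith [key])
    · exact red5 i j a b (by linarith [key])
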